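/- If f : [0, ∞) → ℝⁿ is uniformly continuous and ∫₀^∞ ‖f(t)‖² dt < ∞, then f(t) → 0 as t → ∞. -/

import Mathlib

open MeasureTheory Filter

/-- Barbalat's lemma (integral form): if `f : [0,∞) → ℝⁿ` is uniformly continuous
and `∫₀^∞ ‖f(t)‖² dt < ∞`, then `f(t) → 0` as `t → ∞`. -/
theorem stmt16 (n : ℕ) (f : ℝ → EuclideanSpace ℝ (Fin n))
    (hf : UniformContinuousOn f (Set.Ici 0))
    (hint : IntegrableOn (fun t => ‖f t‖ ^ 2) (Set.Ici 0)) :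
    Tendsto f atTop (nhds 0) := by
  by_contra hcon
  rw [Metric.tendsto_atTop] at hcon
  push_neg at hcon
  obtain ⟨ε, hε, hbad⟩ := hcon
  -- uniform continuity gives δ
  obtain ⟨δ, hδ, hucd⟩ := Metric.uniformContinuousOn_iff.1 hf (ε / 2) (by positivity)
  set c : ℝ := (ε / 2) ^ 2 * (δ / 2) with hc
  have hcpos : 0 < c := by positivity
  -- tail integrals tend to 0
  have htail : Tendsto (fun k : ℕ => ∫ t in Set.Ici (k : ℝ), ‖f t‖ ^ 2) atTop (nhds 0) := by
    have L := tendsto_setIntegral_of_antitone (μ := volume)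
        (f := fun t => ‖f t‖ ^ 2) (s := fun k : ℕ => Set.Ici (k : ℝ))
        (fun _ => measurableSet_Ici)
        (fun a b hab => Set.Ici_subset_Ici.2 (Nat.cast_le.mpr hab))
        ⟨0, hint.mono_set (by simp)⟩
    have hiempty : ⋂ k : ℕ, Set.Ici (k : ℝ) = ∅ := by
      apply Set.eq_empty_of_forall_notMem fun x hx => ?_
      obtain ⟨k, hk⟩ := exists_nat_gt x
      exact absurd (Set.mem_iInter.1 hx k) (by simpa using hk)
    rw [hiempty] at L
    simpa using L
  -- each tail integral is ≥ c
  have hge : ∀ k : ℕ, c ≤ ∫ t in Set.Ici (k : ℝ), ‖f t‖ ^ 2 := by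
    intro k
    obtain ⟨t, ht, hft⟩ := hbad (max (k : ℝ) 0)
    have ht0 : (0 : ℝ) ≤ t := le_trans (le_max_right _ _) ht
    have htk : (k : ℝ) ≤ t := le_trans (le_max_left _ _) ht
    have hIcc : Set.Icc t (t + δ / 2) ⊆ Set.Ici (k : ℝ) := fun s hs =>
      le_trans htk hs.1
    have hbound : ∀ s ∈ Set.Icc t (t + δ / 2), (ε / 2) ^ 2 ≤ ‖f s‖ ^ 2 := by
      intro s hs
      have hs0 : (0 : ℝ) ≤ s := le_trans ht0 hs.1
      have hd : dist s t < δ := by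
        rw [Real.dist_eq, abs_of_nonneg (by linarith [hs.1])]
        linarith [hs.2]
      have := hucd s hs0 t ht0 hd
      have hfs : ε / 2 ≤ ‖f s‖ := by
        have h1 : ‖f t‖ ≤ ‖f s‖ + dist (f s) (f t) := by
          rw [dist_eq_norm]
          calc ‖f t‖ = ‖f s - (f s - f t)‖ := by rw [sub_sub_cancel]
            _ ≤ ‖f s‖ + ‖f s - f t‖ := norm_sub_le _ _
        have h2 : dist (f t) 0 = ‖f t‖ := by simp
        rw [h2] at hft
        linarith
      have := sq_le_sq' (by linarith [norm_nonneg (f s)]) hfs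
      nlinarith [norm_nonneg (f s)]
    have hint' : IntegrableOn (fun t => ‖f t‖ ^ 2) (Set.Icc t (t + δ / 2)) volume :=
      hint.mono_set (hIcc.trans (Set.Ici_subset_Ici.2 (by positivity)))
    have h1 : c ≤ ∫ s in Set.Icc t (t + δ / 2), ‖f s‖ ^ 2 := by
      have := setIntegral_ge_of_const_le (μ := volume) (c := (ε / 2) ^ 2)
        measurableSet_Icc (by simp [Real.volume_Icc]) hbound hint'
      rw [Real.volume_real_Icc_of_le (by linarith)] at this
      have hvol : (t + δ / 2 - t) = δ / 2 := by ring
      rw [hvol] at this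
      rw [smul_eq_mul, mul_comm] at this
      rwa [hc]
    have h2 : ∫ s in Set.Icc t (t + δ / 2), ‖f s‖ ^ 2 ≤ ∫ s in Set.Ici (k : ℝ), ‖f s‖ ^ 2 := by
      apply setIntegral_mono_set (hint.mono_set (Set.Ici_subset_Ici.2 (by positivity)))
      · filter_upwards with s using by positivity
      · exact Filter.Eventually.of_forall hIcc
    linarith
  have := le_of_tendsto_of_tendsto' tendsto_const_nhds htail hge
  linarith
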